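/- Let G be a finite group generated by a twisted subgroup K, with relation ≡ defined by R_0 = {(1,1)}, R_{i+1} = {(kx, k⁻¹y) : (x,y) ∈ R_i, k ∈ K}. If g ≡ h then gK = Kh. Consequently the set of left cosets {gK : g ∈ G} equals the set of right cosets {Kg : g ∈ G}. -/

import Mathlib

open scoped Pointwise

/-- A subset `K` of a group is a twisted subgroup if `1 ∈ K`, `x⁻¹ ∈ K` for all
`x ∈ K`, and `x*y*x ∈ K` for all `x, y ∈ K`. -/
def IsTwistedSubgroup {G : Type*} [Group G] (K : Set G) : Prop :=
  (1 : G) ∈ K ∧ (∀ x ∈ K, x⁻¹ ∈ K) ∧ (∀ x ∈ K, ∀ y ∈ K, x * y * x ∈ K)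

/-- The relation `≡` determined by `K`: `g ≡ h` iff there are `k₁, …, kₙ ∈ K`
with `g = k₁ k₂ ⋯ kₙ` and `h = k₁⁻¹ k₂⁻¹ ⋯ kₙ⁻¹`. -/
def TwistedEquiv {G : Type*} [Group G] (K : Set G) (g h : G) : Prop :=
  ∃ l : List G, (∀ x ∈ l, x ∈ K) ∧ g = l.prod ∧ h = (l.map (·⁻¹)).prod

lemma twisted_key {G : Type*} [Group G] {K : Set G} (hK : IsTwistedSubgroup K)
    {k : G} (hk : k ∈ K) : ({k} : Set G) * K = K * {k⁻¹} := by
  ext x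
  simp only [Set.mem_mul, Set.mem_singleton_iff]
  constructor
  · rintro ⟨a, rfl, b, hb, rfl⟩
    exact ⟨a * b * a, hK.2.2 a hk b hb, a⁻¹, rfl, by group⟩
  · rintro ⟨a, ha, b, rfl, rfl⟩
    exact ⟨k, rfl, k⁻¹ * a * k⁻¹, hK.2.2 k⁻¹ (hK.2.1 k hk) a ha, by group⟩

lemma twisted_main {G : Type*} [Group G] {K : Set G} (hK : IsTwistedSubgroup K)
    (l : List G) (hl : ∀ x ∈ l, x ∈ K) :
    ({l.prod} : Set G) * K = K * {(l.map (·⁻¹)).prod} := by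
  induction l with
  | nil => simp
  | cons k t ih =>
    have hk : k ∈ K := hl k (List.mem_cons_self (a := k) (l := t))
    have ht : ∀ x ∈ t, x ∈ K := fun x hx => hl x (List.mem_cons_of_mem _ hx)
    calc ({(k :: t).prod} : Set G) * K
        = ({k} : Set G) * (({t.prod} : Set G) * K) := by
          rw [List.prod_cons, ← Set.singleton_mul_singleton, mul_assoc]
      _ = ({k} : Set G) * (K * {(t.map (·⁻¹)).prod}) := by rw [ih ht]
      _ = (({k} : Set G) * K) * {(t.map (·⁻¹)).prod} := by rw [mul_assoc]
      _ = (K * {k⁻¹}) * {(t.map (·⁻¹)).prod} := by rw [twisted_key hK hk]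
      _ = K * {((k :: t).map (·⁻¹)).prod} := by
          rw [mul_assoc, Set.singleton_mul_singleton, List.map_cons, List.prod_cons]

lemma twisted_exists_list {G : Type*} [Group G] {K : Set G} (hK : IsTwistedSubgroup K)
    (hgen : Subgroup.closure K = ⊤) (g : G) :
    ∃ l : List G, (∀ x ∈ l, x ∈ K) ∧ g = l.prod := by
  have hinv : K⁻¹ ⊆ K := fun x hx => by simpa using hK.2.1 x⁻¹ hx
  have hunion : K ∪ K⁻¹ = K := Set.union_eq_self_of_subset_right hinv
  have hg : g ∈ Submonoid.closure K := by
    have : g ∈ (Subgroup.closure K).toSubmonoid := by rw [hgen]; trivial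
    rwa [Subgroup.closure_toSubmonoid, hunion] at this
  obtain ⟨l, hl, hprod⟩ := Submonoid.exists_list_of_mem_closure hg
  exact ⟨l, hl, hprod.symm⟩

/-- If `G` is a finite group generated by a twisted subgroup `K`,
then `g ≡ h` implies `gK = Kh`; consequently the set of left cosets
`{gK : g ∈ G}` equals the set of right cosets `{Kg : g ∈ G}`. -/
theorem twistedEquiv_coset {G : Type*} [Group G] [Finite G]
    (K : Set G) (hK : IsTwistedSubgroup K)
    (hgen : Subgroup.closure K = ⊤) :
    (∀ g h : G, TwistedEquiv K g h → ({g} : Set G) * K = K * {h}) ∧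
      {S : Set G | ∃ g : G, S = ({g} : Set G) * K} =
        {S : Set G | ∃ g : G, S = K * ({g} : Set G)} := by
  constructor
  · rintro g h ⟨l, hl, rfl, rfl⟩
    exact twisted_main hK l hl
  · ext S
    simp only [Set.mem_setOf_eq]
    constructor
    · rintro ⟨g, rfl⟩
      obtain ⟨l, hl, hg⟩ := twisted_exists_list hK hgen g
      rw [hg]
      exact ⟨(l.map (·⁻¹)).prod, twisted_main hK l hl⟩
    · rintro ⟨h, rfl⟩
      obtain ⟨l, hl, hh⟩ := twisted_exists_list hK hgen h
      have hl' : ∀ x ∈ l.map (·⁻¹), x ∈ K := by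
        intro x hx
        simp only [List.mem_map] at hx
        obtain ⟨y, hy, rfl⟩ := hx
        exact hK.2.1 y (hl y hy)
      refine ⟨((l.map (·⁻¹))).prod, ?_⟩
      have hmm : ((l.map (·⁻¹)).map (·⁻¹)).prod = h := by
        simp only [List.map_map]
        have : ((·⁻¹) ∘ (·⁻¹) : G → G) = id := by funext x; simp
        rw [this, List.map_id, ← hh]
      rw [twisted_main hK (l.map (·⁻¹)) hl', hmm]
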